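/- For all integers a ≥ 1, b ≥ 1 and every positive integer k, the number of (b+1)-tuples (m₁, …, m_{b+1}) of nonnegative integers with m₁ + ⋯ + m_{b+1} = a and m_i ≤ k for every i is at least (1 − (b+1)·exp(−b(k+1)/(a+b))) · C(a+b, b), where C(a+b, b) is the binomial coefficient. -/

import Mathlib

open Finset

lemma cardAT : ∀ (c n : ℕ), (Finset.Nat.antidiagonalTuple (c + 1) n).card = (n + c).choose c := by
  intro c
  induction c with
  | zero => intro n; simp [Finset.Nat.antidiagonalTuple_one]
  | succ c ih =>
    intro n
    induction n with
    | zero => simp [Finset.Nat.antidiagonalTuple_zero_right]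
    | succ n ihn =>
      classical
      set s := Finset.Nat.antidiagonalTuple (c + 2) (n + 1) with hs
      have hsplit := Finset.card_filter_add_card_filter_not (s := s)
        (p := fun m => m 0 = 0)
      have h1 : (s.filter fun m => m 0 = 0).card
          = (Finset.Nat.antidiagonalTuple (c + 1) (n + 1)).card := by
        apply Finset.card_nbij' (fun m => Fin.tail m) (fun x => Fin.cons 0 x)
        · intro m hm
          simp only [hs, Finset.mem_coe, Finset.mem_filter, Finset.Nat.mem_antidiagonalTuple] at hm ⊢
          have := hm.1
          rw [Fin.sum_univ_succ, hm.2, zero_add] at this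
          exact this
        · intro x hx
          simp only [hs, Finset.mem_coe, Finset.mem_filter, Finset.Nat.mem_antidiagonalTuple] at hx ⊢
          constructor
          · rw [Fin.sum_cons, hx, zero_add]
          · simp
        · intro m hm
          simp only [hs, Finset.mem_coe, Finset.mem_filter] at hm
          rw [← hm.2]
          exact Fin.cons_self_tail m
        · intro x _
          simp
      have h2 : (s.filter fun m => ¬ m 0 = 0).card
          = (Finset.Nat.antidiagonalTuple (c + 2) n).card := by
        apply Finset.card_nbij' (fun m => Fin.cons (m 0 - 1) (Fin.tail m))
          (fun x => Fin.cons (x 0 + 1) (Fin.tail x))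
        · intro m hm
          simp only [hs, Finset.mem_coe, Finset.mem_filter, Finset.Nat.mem_antidiagonalTuple] at hm ⊢
          have h := hm.1
          rw [Fin.sum_univ_succ] at h
          rw [Fin.sum_cons]
          have : ∑ i : Fin (c + 1), Fin.tail m i = ∑ i : Fin (c + 1), m i.succ := rfl
          rw [this]
          set S := ∑ i : Fin (c + 1), m i.succ with hS
          have hne := hm.2
          clear * - h hne
          omega
        · intro x hx
          simp only [hs, Finset.mem_coe, Finset.mem_filter, Finset.Nat.mem_antidiagonalTuple] at hx ⊢
          constructor
          · rw [Fin.sum_univ_succ, Fin.cons_zero]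
            have : ∑ i : Fin (c + 1), Fin.cons (x 0 + 1) (Fin.tail x) i.succ
                = ∑ i : Fin (c + 1), Fin.tail x i := by
              refine Finset.sum_congr rfl fun i _ => ?_
              simp [Fin.tail_cons]
            rw [this]
            rw [Fin.sum_univ_succ] at hx
            have h2 : ∑ i : Fin (c + 1), Fin.tail x i = ∑ i : Fin (c + 1), x i.succ := rfl
            rw [h2]
            set S := ∑ i : Fin (c + 1), x i.succ with hS
            clear * - hx
            omega
          · simp
        · intro m hm
          simp only [hs, Finset.mem_coe, Finset.mem_filter] at hm
          beta_reduce
          rw [Fin.cons_zero, Fin.tail_cons]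
          have : m 0 - 1 + 1 = m 0 := Nat.succ_pred_eq_of_pos (Nat.pos_of_ne_zero hm.2)
          rw [this]
          exact Fin.cons_self_tail m
        · intro x _
          beta_reduce
          rw [Fin.cons_zero, Fin.tail_cons, Nat.add_sub_cancel]
          exact Fin.cons_self_tail x
      have h3 : (Finset.Nat.antidiagonalTuple (c + 2) n).card
          = (n + (c + 1)).choose (c + 1) := ihn
      rw [h1, h2, ih (n + 1), h3] at hsplit
      have e1 : n + 1 + (c + 1) = (n + c + 1) + 1 := by ring
      have e2 : n + 1 + c = n + c + 1 := by ring
      have e3 : n + (c + 1) = n + c + 1 := by ring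
      rw [e1, Nat.choose_succ_succ]
      rw [e2, e3] at hsplit
      simp only [Nat.succ_eq_add_one]
      clear * - hsplit
      omega

lemma choose_decay (a b : ℕ) (hb : 1 ≤ b) : ∀ t, t ≤ a →
    (((a + b - t).choose b : ℕ) : ℝ)
      ≤ Real.exp (-((b : ℝ) * t) / ((a : ℝ) + b)) * (((a + b).choose b : ℕ) : ℝ) := by
  intro t
  induction t with
  | zero => simp
  | succ t ih =>
    intro ht
    have ht' : t ≤ a := Nat.le_of_succ_le ht
    have H := ih ht'
    set n : ℕ := a + b - (t + 1) with hn
    have hn1 : n + 1 = a + b - t := by omega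
    have hbn : b ≤ n + 1 := by omega
    have hpos : (0 : ℝ) < (n : ℝ) + 1 := by positivity
    have hkey := Nat.choose_mul_succ_eq n b
    have hkeyR : (n.choose b : ℝ) * ((n : ℝ) + 1)
        = ((n + 1).choose b : ℝ) * (((n : ℝ) + 1) - (b : ℝ)) := by
      have := congrArg (fun x : ℕ => (x : ℝ)) hkey
      push_cast [Nat.cast_sub hbn] at this
      linarith [this]
    have hab : (n : ℝ) + 1 ≤ (a : ℝ) + b := by
      have : n + 1 ≤ a + b := by omega
      exact_mod_cast this
    have habpos : (0 : ℝ) < (a : ℝ) + b := by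
      have hbR : (1 : ℝ) ≤ (b : ℝ) := by exact_mod_cast hb
      have haR : (0 : ℝ) ≤ (a : ℝ) := Nat.cast_nonneg a
      linarith
    have hchoose_nonneg : (0 : ℝ) ≤ ((n + 1).choose b : ℝ) := by positivity
    have hstep : (n.choose b : ℝ)
        ≤ Real.exp (-(b : ℝ) / ((a : ℝ) + b)) * ((n + 1).choose b : ℝ) := by
      have h1 : (n.choose b : ℝ)
          = ((n + 1).choose b : ℝ) * (1 - (b : ℝ) / ((n : ℝ) + 1)) := by
        field_simp
        linarith [hkeyR]
      have h2 : (1 : ℝ) - (b : ℝ) / ((n : ℝ) + 1)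
          ≤ Real.exp (-((b : ℝ) / ((n : ℝ) + 1))) := by
        have := Real.add_one_le_exp (-((b : ℝ) / ((n : ℝ) + 1)))
        linarith
      have h3 : Real.exp (-((b : ℝ) / ((n : ℝ) + 1)))
          ≤ Real.exp (-(b : ℝ) / ((a : ℝ) + b)) := by
        apply Real.exp_le_exp.2
        rw [neg_div]
        apply neg_le_neg
        exact div_le_div_of_nonneg_left (by positivity) hpos hab
      calc (n.choose b : ℝ) = ((n + 1).choose b : ℝ) * (1 - (b : ℝ) / ((n : ℝ) + 1)) := h1
        _ ≤ ((n + 1).choose b : ℝ) * Real.exp (-((b : ℝ) / ((n : ℝ) + 1))) := by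
            apply mul_le_mul_of_nonneg_left h2 hchoose_nonneg
        _ ≤ ((n + 1).choose b : ℝ) * Real.exp (-(b : ℝ) / ((a : ℝ) + b)) := by
            apply mul_le_mul_of_nonneg_left h3 hchoose_nonneg
        _ = Real.exp (-(b : ℝ) / ((a : ℝ) + b)) * ((n + 1).choose b : ℝ) := by ring
    rw [hn1] at hstep
    have hE : (0 : ℝ) < Real.exp (-(b : ℝ) / ((a : ℝ) + b)) := Real.exp_pos _
    have : (n.choose b : ℝ)
        ≤ Real.exp (-(b : ℝ) / ((a : ℝ) + b))
          * (Real.exp (-((b : ℝ) * t) / ((a : ℝ) + b)) * ((a + b).choose b : ℝ)) := by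
      calc (n.choose b : ℝ) ≤ _ := hstep
        _ ≤ _ := by apply mul_le_mul_of_nonneg_left H (le_of_lt hE)
    rw [← mul_assoc, ← Real.exp_add] at this
    have heq : -(b : ℝ) / ((a : ℝ) + b) + -((b : ℝ) * t) / ((a : ℝ) + b)
        = -((b : ℝ) * ((t : ℕ) + 1 : ℕ)) / ((a : ℝ) + b) := by
      rw [← add_div]
      push_cast
      ring_nf
    rw [heq] at this
    exact this

theorem stmt18 (a b k : ℕ) (ha : 1 ≤ a) (hb : 1 ≤ b) (hk : 1 ≤ k) :
    (1 - ((b : ℝ) + 1) * Real.exp (-((b : ℝ) * ((k : ℝ) + 1)) / ((a : ℝ) + (b : ℝ)))) *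
        (((a + b).choose b : ℕ) : ℝ)
      ≤ (((Fintype.piFinset (fun _ : Fin (b + 1) => Finset.Iic k)).filter
          (fun m : Fin (b + 1) → ℕ => ∑ i, m i = a)).card : ℝ) := by
  classical
  set T := Finset.Nat.antidiagonalTuple (b + 1) a with hTdef
  have hTcard : T.card = (a + b).choose b := cardAT b a
  set G := (Fintype.piFinset (fun _ : Fin (b + 1) => Finset.Iic k)).filter
      (fun m : Fin (b + 1) → ℕ => ∑ i, m i = a) with hGdef
  have hG : G = T.filter (fun m => ∀ i, m i ≤ k) := by
    ext m
    simp only [hGdef, hTdef, Finset.mem_filter, Fintype.mem_piFinset, Finset.mem_Iic,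
      Finset.Nat.mem_antidiagonalTuple]
    tauto
  have hEpos : 0 < Real.exp (-((b : ℝ) * ((k : ℝ) + 1)) / ((a : ℝ) + (b : ℝ))) :=
    Real.exp_pos _
  have hCnn : (0 : ℝ) ≤ (((a + b).choose b : ℕ) : ℝ) := Nat.cast_nonneg _
  have hb1nn : (0 : ℝ) ≤ (b : ℝ) + 1 := by positivity
  by_cases hak : a ≤ k
  · have hGT : G = T := by
      rw [hG]
      apply Finset.filter_true_of_mem
      intro m hm i
      have hsum : ∑ j, m j = a := (Finset.Nat.mem_antidiagonalTuple).1 hm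
      have hle : m i ≤ ∑ j, m j :=
        Finset.single_le_sum (fun j _ => Nat.zero_le _) (Finset.mem_univ i)
      omega
    rw [hGT, hTcard]
    nlinarith [hCnn, hEpos, hb1nn,
      mul_nonneg (mul_nonneg hb1nn hEpos.le) hCnn]
  · push_neg at hak
    have hka : k + 1 ≤ a := hak
    have hGB : G.card + (T.filter (fun m => ¬ ∀ i, m i ≤ k)).card = T.card := by
      rw [hG]; exact Finset.card_filter_add_card_filter_not _
    have hbad : ∀ i : Fin (b + 1),
        (T.filter (fun m => k + 1 ≤ m i)).card = (a - (k + 1) + b).choose b := by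
      intro i
      rw [← cardAT b (a - (k + 1))]
      apply Finset.card_nbij' (fun m => Function.update m i (m i - (k + 1)))
        (fun x => Function.update x i (x i + (k + 1)))
      · intro m hm
        simp only [hTdef, Finset.mem_coe, Finset.mem_filter, Finset.Nat.mem_antidiagonalTuple] at hm ⊢
        rw [Finset.sum_update_of_mem (Finset.mem_univ i)]
        have h1 := hm.1
        rw [Finset.sum_eq_sum_sdiff_singleton_add (Finset.mem_univ i) m] at h1
        have h2 := hm.2
        set S := ∑ j ∈ Finset.univ \ {i}, m j with hS
        clear * - h1 h2 hka
        omega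
      · intro x hx
        simp only [hTdef, Finset.mem_coe, Finset.mem_filter, Finset.Nat.mem_antidiagonalTuple] at hx ⊢
        have h1 := hx
        rw [Finset.sum_eq_sum_sdiff_singleton_add (Finset.mem_univ i) x] at h1
        constructor
        · rw [Finset.sum_update_of_mem (Finset.mem_univ i)]
          set S := ∑ j ∈ Finset.univ \ {i}, x j with hS
          clear * - h1 hka
          omega
        · simp
      · intro m hm
        simp only [hTdef, Finset.mem_coe, Finset.mem_filter] at hm
        simp only [Function.update_idem, Function.update_self]
        have : m i - (k + 1) + (k + 1) = m i := Nat.sub_add_cancel hm.2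
        rw [this]
        exact Function.update_eq_self i m
      · intro x _
        simp only [Function.update_idem, Function.update_self, Nat.add_sub_cancel]
        exact Function.update_eq_self i x
    have hsub : T.filter (fun m => ¬ ∀ i, m i ≤ k)
        ⊆ Finset.univ.biUnion (fun i : Fin (b + 1) => T.filter (fun m => k + 1 ≤ m i)) := by
      intro m hm
      simp only [Finset.mem_filter] at hm
      obtain ⟨i, hi⟩ := not_forall.1 hm.2
      exact Finset.mem_biUnion.2 ⟨i, Finset.mem_univ i,
        Finset.mem_filter.2 ⟨hm.1, Nat.lt_of_not_le hi⟩⟩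
    have hBcard : (T.filter fun m => ¬ ∀ i, m i ≤ k).card
        ≤ (b + 1) * ((a - (k + 1) + b).choose b) := by
      calc (T.filter fun m => ¬ ∀ i, m i ≤ k).card
          ≤ (Finset.univ.biUnion
              (fun i : Fin (b + 1) => T.filter (fun m => k + 1 ≤ m i))).card :=
            Finset.card_le_card hsub
        _ ≤ ∑ i : Fin (b + 1), (T.filter fun m => k + 1 ≤ m i).card :=
            Finset.card_biUnion_le
        _ = ∑ _i : Fin (b + 1), (a - (k + 1) + b).choose b := by
            exact Finset.sum_congr rfl fun i _ => hbad i
        _ = (b + 1) * ((a - (k + 1) + b).choose b) := by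
            simp [Finset.sum_const, Finset.card_univ]
    have hdecay := choose_decay a b hb (k + 1) hka
    have heqn : a + b - (k + 1) = a - (k + 1) + b := by clear * - hka; omega
    rw [heqn] at hdecay
    push_cast at hdecay
    have h1 : (G.card : ℝ) + ((T.filter (fun m => ¬ ∀ i, m i ≤ k)).card : ℝ)
        = (((a + b).choose b : ℕ) : ℝ) := by
      have := hGB
      rw [hTcard] at this
      exact_mod_cast this
    have h2 : ((T.filter (fun m => ¬ ∀ i, m i ≤ k)).card : ℝ)
        ≤ ((b : ℝ) + 1) * (((a - (k + 1) + b).choose b : ℕ) : ℝ) := by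
      exact_mod_cast hBcard
    have h3 : ((b : ℝ) + 1) * (((a - (k + 1) + b).choose b : ℕ) : ℝ)
        ≤ ((b : ℝ) + 1) * (Real.exp (-((b : ℝ) * ((k : ℝ) + 1)) / ((a : ℝ) + (b : ℝ)))
            * (((a + b).choose b : ℕ) : ℝ)) := by
      apply mul_le_mul_of_nonneg_left _ hb1nn
      convert hdecay using 3
    linarith
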